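/- Let R be a natural number and let u, v : ℝ² → ℝ be the polynomial functions u(x,y) = Σ_{r=0}^{R} Σ_{s=0}^{r} a_r^s x^{r-s} y^s and v(x,y) = Σ_{r=0}^{R} Σ_{s=0}^{r} A_r^s x^{r-s} y^s with real coefficients a_r^s, A_r^s. If u and v satisfy the Cauchy–Riemann equations (∂u/∂x = ∂v/∂y and ∂u/∂y = −∂v/∂x identically on ℝ²), then for all real x, y: u(x,y) = a_0^0 + Σ_{r=1}^{R} ( a_r^0 · Re((x+iy)^r) + (a_r^1/r) · Im((x+iy)^r) ) and v(x,y) = A_0^0 + Σ_{r=1}^{R} ( a_r^0 · Im((x+iy)^r) − (a_r^1/r) · Re((x+iy)^r) ). -/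

import Mathlib

open Finset

lemma L1 (M : ℕ) (d : ℕ → ℝ) (h : ∀ x : ℝ, ∑ i ∈ Finset.range M, d i * x ^ i = 0) :
    ∀ i < M, d i = 0 := by
  intro i hi
  have hp : (∑ j ∈ Finset.range M, Polynomial.C (d j) * Polynomial.X ^ j : Polynomial ℝ) = 0 := by
    apply Polynomial.funext
    intro x
    simpa [Polynomial.eval_finset_sum] using h x
  have := congrArg (fun p => Polynomial.coeff p i) hp
  simpa [Polynomial.finset_sum_coeff, Polynomial.coeff_C_mul, Polynomial.coeff_X_pow,
    Finset.sum_ite_eq' (Finset.range M) i, hi] using this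

lemma L2 (M : ℕ) (c : ℕ → ℕ → ℝ)
    (h : ∀ x y : ℝ, ∑ r ∈ Finset.range M, ∑ s ∈ Finset.range (r+1),
      c r s * x ^ (r - s) * y ^ s = 0) :
    ∀ r < M, ∀ s ≤ r, c r s = 0 := by
  intro r hr s hs
  have h' : ∀ u t : ℝ, ∑ r ∈ Finset.range M, (∑ s ∈ Finset.range (r+1), c r s * u ^ s) * t ^ r = 0 := by
    intro u t
    have := h t (t * u)
    rw [← this]
    apply Finset.sum_congr rfl
    intro r hr
    rw [Finset.sum_mul]
    apply Finset.sum_congr rfl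
    intro s hs
    rw [Finset.mem_range, Nat.lt_succ_iff] at hs
    rw [mul_pow]
    have hpow : t ^ (r - s) * t ^ s = t ^ r := by rw [← pow_add, Nat.sub_add_cancel hs]
    rw [← hpow]
    ring
  have h2 : ∀ u : ℝ, ∑ s ∈ Finset.range (r+1), c r s * u ^ s = 0 := by
    intro u
    exact L1 M (fun r => ∑ s ∈ Finset.range (r+1), c r s * u ^ s) (h' u) r hr
  exact L1 (r+1) (c r) h2 s (Nat.lt_succ_of_le hs)

lemma hderiv_x (b : ℕ → ℕ → ℝ) (R : ℕ) (y x : ℝ) :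
    HasDerivAt (fun t => ∑ r ∈ Finset.range (R+1), ∑ s ∈ Finset.range (r+1),
        b r s * t ^ (r - s) * y ^ s)
      (∑ r ∈ Finset.range (R+1), ∑ s ∈ Finset.range (r+1),
        b r s * (((r - s : ℕ) : ℝ) * x ^ (r - s - 1)) * y ^ s) x := by
  apply HasDerivAt.fun_sum
  intro r _
  apply HasDerivAt.fun_sum
  intro s _
  have h := ((hasDerivAt_pow (r - s) x).const_mul (b r s)).mul_const (y ^ s)
  exact h

lemma hderiv_y (b : ℕ → ℕ → ℝ) (R : ℕ) (x y : ℝ) :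
    HasDerivAt (fun t => ∑ r ∈ Finset.range (R+1), ∑ s ∈ Finset.range (r+1),
        b r s * x ^ (r - s) * t ^ s)
      (∑ r ∈ Finset.range (R+1), ∑ s ∈ Finset.range (r+1),
        b r s * x ^ (r - s) * ((s : ℝ) * y ^ (s - 1))) y := by
  apply HasDerivAt.fun_sum
  intro r _
  apply HasDerivAt.fun_sum
  intro s _
  exact (hasDerivAt_pow s y).const_mul (b r s * x ^ (r - s))

lemma reshape_dx (b : ℕ → ℕ → ℝ) (R : ℕ) (x y : ℝ) :
    ∑ r ∈ Finset.range (R+1), ∑ s ∈ Finset.range (r+1),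
        b r s * (((r - s : ℕ) : ℝ) * x ^ (r - s - 1)) * y ^ s
    = ∑ r ∈ Finset.range R, ∑ s ∈ Finset.range (r+1),
        (((r + 1 - s : ℕ) : ℝ) * b (r+1) s) * x ^ (r - s) * y ^ s := by
  rw [Finset.sum_range_succ']
  simp only [Nat.zero_sub, Nat.cast_zero, zero_mul, mul_zero, Finset.sum_range_one, add_zero,
    Nat.sub_zero, zero_add]
  apply Finset.sum_congr rfl
  intro r _
  rw [Finset.sum_range_succ]
  simp only [Nat.sub_self, Nat.cast_zero, zero_mul, mul_zero, add_zero]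
  apply Finset.sum_congr rfl
  intro s hs
  rw [Finset.mem_range, Nat.lt_succ_iff] at hs
  have h1 : r + 1 - s - 1 = r - s := by omega
  rw [h1]
  ring

lemma reshape_dy (b : ℕ → ℕ → ℝ) (R : ℕ) (x y : ℝ) :
    ∑ r ∈ Finset.range (R+1), ∑ s ∈ Finset.range (r+1),
        b r s * x ^ (r - s) * ((s : ℝ) * y ^ (s - 1))
    = ∑ r ∈ Finset.range R, ∑ s ∈ Finset.range (r+1),
        (((s : ℝ) + 1) * b (r+1) (s+1)) * x ^ (r - s) * y ^ s := by
  rw [Finset.sum_range_succ']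
  rw [show (∑ s ∈ Finset.range (0+1), b 0 s * x ^ (0 - s) * ((s:ℝ) * y ^ (s-1))) = 0 by simp]
  rw [add_zero]
  apply Finset.sum_congr rfl
  intro r _
  rw [Finset.sum_range_succ']
  rw [show b (r+1) 0 * x ^ (r+1-0) * ((0:ℕ) * y ^ (0-1)) = 0 by simp]
  rw [add_zero]
  apply Finset.sum_congr rfl
  intro s hs
  rw [Finset.mem_range, Nat.lt_succ_iff] at hs
  have h1 : r + 1 - (s + 1) = r - s := by omega
  rw [h1]
  push_cast
  ring

lemma key (R : ℕ) (a A : ℕ → ℕ → ℝ)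
    (K1 : ∀ r, 1 ≤ r → r ≤ R → ∀ s < r,
      ((r - s : ℕ) : ℝ) * a r s = ((s : ℝ) + 1) * A r (s+1))
    (K2 : ∀ r, 1 ≤ r → r ≤ R → ∀ s < r,
      ((s : ℝ) + 1) * a r (s+1) = -(((r - s : ℕ) : ℝ) * A r s)) :
    ∀ r, 1 ≤ r → r ≤ R → ∀ s ≤ r,
      a r s = (r.choose s : ℝ) * (a r 0 * (Complex.I ^ s).re + (a r 1 / r) * (Complex.I ^ s).im)
      ∧ A r s = (r.choose s : ℝ) * (a r 0 * (Complex.I ^ s).im - (a r 1 / r) * (Complex.I ^ s).re) := by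
  intro r hr1 hrR
  have hrne : (r : ℝ) ≠ 0 := Nat.cast_ne_zero.mpr (by omega)
  intro s
  induction s with
  | zero =>
    intro _
    constructor
    · simp
    · have h := K2 r hr1 hrR 0 (by omega)
      simp only [Nat.cast_zero, zero_add, one_mul, Nat.sub_zero] at h
      have : A r 0 = -(a r 1 / r) := by
        field_simp at h ⊢
        linarith [h]
      simp [this]
  | succ s ih =>
    intro hs1
    have hslt : s < r := by omega
    obtain ⟨ha, hA⟩ := ih (by omega)
    have hre : (Complex.I ^ (s+1)).re = -(Complex.I ^ s).im := by
      rw [pow_succ, Complex.mul_re]; simp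
    have him : (Complex.I ^ (s+1)).im = (Complex.I ^ s).re := by
      rw [pow_succ, Complex.mul_im]; simp
    have hchoose : ((r.choose (s+1) : ℕ) : ℝ) * ((s : ℝ) + 1)
        = ((r.choose s : ℕ) : ℝ) * ((r - s : ℕ) : ℝ) := by
      have := Nat.choose_succ_right_eq r s
      exact_mod_cast congrArg (fun n : ℕ => (n : ℝ)) this
    have hs1ne : ((s : ℝ) + 1) ≠ 0 := by positivity
    constructor
    · have h := K2 r hr1 hrR s hslt
      apply mul_left_cancel₀ hs1ne
      rw [h, hA, hre, him]
      calc -(((r - s : ℕ) : ℝ) * ((r.choose s : ℝ) * (a r 0 * (Complex.I ^ s).im - a r 1 / ↑r * (Complex.I ^ s).re)))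
          = (((r.choose s : ℕ) : ℝ) * ((r - s : ℕ) : ℝ)) * (-(a r 0 * (Complex.I ^ s).im) + a r 1 / ↑r * (Complex.I ^ s).re) := by ring
        _ = (((r.choose (s+1) : ℕ) : ℝ) * ((s : ℝ) + 1)) * (-(a r 0 * (Complex.I ^ s).im) + a r 1 / ↑r * (Complex.I ^ s).re) := by rw [hchoose]
        _ = ((s:ℝ)+1) * (↑(r.choose (s + 1)) * (a r 0 * -(Complex.I ^ s).im + a r 1 / ↑r * (Complex.I ^ s).re)) := by ring
    · have h := K1 r hr1 hrR s hslt
      apply mul_left_cancel₀ hs1ne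
      rw [← h, ha, hre, him]
      calc ((r - s : ℕ) : ℝ) * (((r.choose s : ℕ) : ℝ) * (a r 0 * (Complex.I ^ s).re + a r 1 / ↑r * (Complex.I ^ s).im))
          = (((r.choose (s+1) : ℕ) : ℝ) * ((s : ℝ) + 1)) * (a r 0 * (Complex.I ^ s).re + a r 1 / ↑r * (Complex.I ^ s).im) := by rw [hchoose]; ring
        _ = ((s:ℝ)+1) * (↑(r.choose (s + 1)) * (a r 0 * (Complex.I ^ s).re - a r 1 / ↑r * -(Complex.I ^ s).im)) := by ring

lemma binom (x y : ℝ) (r : ℕ) : ((x:ℂ) + (y:ℂ) * Complex.I) ^ r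
    = ∑ s ∈ Finset.range (r+1), ((x ^ (r-s) * y ^ s * (r.choose s) : ℝ) : ℂ) * Complex.I ^ s := by
  rw [add_comm, add_pow]
  apply Finset.sum_congr rfl
  intro s hs
  rw [mul_pow]
  push_cast
  ring

lemma binom_re (x y : ℝ) (r : ℕ) : (((x:ℂ) + (y:ℂ) * Complex.I) ^ r).re
    = ∑ s ∈ Finset.range (r+1), ((r.choose s : ℝ) * (Complex.I ^ s).re) * x ^ (r-s) * y ^ s := by
  rw [binom, Complex.re_sum]
  apply Finset.sum_congr rfl
  intro s _
  rw [Complex.re_ofReal_mul]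
  ring

lemma binom_im (x y : ℝ) (r : ℕ) : (((x:ℂ) + (y:ℂ) * Complex.I) ^ r).im
    = ∑ s ∈ Finset.range (r+1), ((r.choose s : ℝ) * (Complex.I ^ s).im) * x ^ (r-s) * y ^ s := by
  rw [binom, Complex.im_sum]
  apply Finset.sum_congr rfl
  intro s _
  rw [Complex.im_ofReal_mul]
  ring

lemma sum_formula_u (r : ℕ) (a : ℕ → ℕ → ℝ) (x y : ℝ)
    (hform : ∀ s ≤ r, a r s = (r.choose s : ℝ) *
      (a r 0 * (Complex.I ^ s).re + (a r 1 / r) * (Complex.I ^ s).im)) :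
    ∑ s ∈ Finset.range (r+1), a r s * x ^ (r-s) * y ^ s
    = a r 0 * (((x:ℂ) + (y:ℂ) * Complex.I) ^ r).re
      + (a r 1 / r) * (((x:ℂ) + (y:ℂ) * Complex.I) ^ r).im := by
  rw [binom_re, binom_im, Finset.mul_sum, Finset.mul_sum, ← Finset.sum_add_distrib]
  apply Finset.sum_congr rfl
  intro s hs
  rw [Finset.mem_range, Nat.lt_succ_iff] at hs
  rw [hform s hs]
  ring

lemma sum_formula_v (r : ℕ) (a A : ℕ → ℕ → ℝ) (x y : ℝ)
    (hform : ∀ s ≤ r, A r s = (r.choose s : ℝ) *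
      (a r 0 * (Complex.I ^ s).im - (a r 1 / r) * (Complex.I ^ s).re)) :
    ∑ s ∈ Finset.range (r+1), A r s * x ^ (r-s) * y ^ s
    = a r 0 * (((x:ℂ) + (y:ℂ) * Complex.I) ^ r).im
      - (a r 1 / r) * (((x:ℂ) + (y:ℂ) * Complex.I) ^ r).re := by
  rw [binom_re, binom_im, Finset.mul_sum, Finset.mul_sum, ← Finset.sum_sub_distrib]
  apply Finset.sum_congr rfl
  intro s hs
  rw [Finset.mem_range, Nat.lt_succ_iff] at hs
  rw [hform s hs]
  ring




/-- If the bivariate real polynomials `u`, `v` with coefficients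
`a r s`, `A r s` satisfy the Cauchy–Riemann equations, then `u` and `v` admit
the compact representation in terms of real and imaginary parts of `(x+iy)^r`. -/
theorem stmt_0 (R : ℕ) (a A : ℕ → ℕ → ℝ) (u v : ℝ → ℝ → ℝ)
    (hu : ∀ x y : ℝ, u x y =
      ∑ r ∈ Finset.range (R + 1), ∑ s ∈ Finset.range (r + 1),
        a r s * x ^ (r - s) * y ^ s)
    (hv : ∀ x y : ℝ, v x y =
      ∑ r ∈ Finset.range (R + 1), ∑ s ∈ Finset.range (r + 1),
        A r s * x ^ (r - s) * y ^ s)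
    (hCR1 : ∀ x y : ℝ, deriv (fun t => u t y) x = deriv (fun t => v x t) y)
    (hCR2 : ∀ x y : ℝ, deriv (fun t => u x t) y = - deriv (fun t => v t y) x) :
    ∀ x y : ℝ,
      u x y = a 0 0 + ∑ r ∈ Finset.Icc 1 R,
        (a r 0 * (((x : ℂ) + (y : ℂ) * Complex.I) ^ r).re
          + (a r 1 / r) * (((x : ℂ) + (y : ℂ) * Complex.I) ^ r).im)
      ∧
      v x y = A 0 0 + ∑ r ∈ Finset.Icc 1 R,
        (a r 0 * (((x : ℂ) + (y : ℂ) * Complex.I) ^ r).im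
          - (a r 1 / r) * (((x : ℂ) + (y : ℂ) * Complex.I) ^ r).re) := by
  -- compute the partial derivatives
  have du_x : ∀ x y : ℝ, deriv (fun t => u t y) x =
      ∑ r ∈ Finset.range (R+1), ∑ s ∈ Finset.range (r+1),
        a r s * (((r - s : ℕ) : ℝ) * x ^ (r - s - 1)) * y ^ s := by
    intro x y
    have e1 : (fun t => u t y) = fun t => ∑ r ∈ Finset.range (R+1),
        ∑ s ∈ Finset.range (r+1), a r s * t ^ (r - s) * y ^ s := funext fun t => hu t y
    rw [e1]
    exact (hderiv_x a R y x).deriv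
  have dv_x : ∀ x y : ℝ, deriv (fun t => v t y) x =
      ∑ r ∈ Finset.range (R+1), ∑ s ∈ Finset.range (r+1),
        A r s * (((r - s : ℕ) : ℝ) * x ^ (r - s - 1)) * y ^ s := by
    intro x y
    have e1 : (fun t => v t y) = fun t => ∑ r ∈ Finset.range (R+1),
        ∑ s ∈ Finset.range (r+1), A r s * t ^ (r - s) * y ^ s := funext fun t => hv t y
    rw [e1]
    exact (hderiv_x A R y x).deriv
  have du_y : ∀ x y : ℝ, deriv (fun t => u x t) y =
      ∑ r ∈ Finset.range (R+1), ∑ s ∈ Finset.range (r+1),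
        a r s * x ^ (r - s) * ((s : ℝ) * y ^ (s - 1)) := by
    intro x y
    have e1 : (fun t => u x t) = fun t => ∑ r ∈ Finset.range (R+1),
        ∑ s ∈ Finset.range (r+1), a r s * x ^ (r - s) * t ^ s := funext fun t => hu x t
    rw [e1]
    exact (hderiv_y a R x y).deriv
  have dv_y : ∀ x y : ℝ, deriv (fun t => v x t) y =
      ∑ r ∈ Finset.range (R+1), ∑ s ∈ Finset.range (r+1),
        A r s * x ^ (r - s) * ((s : ℝ) * y ^ (s - 1)) := by
    intro x y
    have e1 : (fun t => v x t) = fun t => ∑ r ∈ Finset.range (R+1),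
        ∑ s ∈ Finset.range (r+1), A r s * x ^ (r - s) * t ^ s := funext fun t => hv x t
    rw [e1]
    exact (hderiv_y A R x y).deriv
  -- coefficient relations from CR1
  have K1' : ∀ r < R, ∀ s ≤ r,
      (((r + 1 - s : ℕ) : ℝ) * a (r+1) s) - (((s : ℝ) + 1) * A (r+1) (s+1)) = 0 := by
    apply L2 R
    intro x y
    have h := hCR1 x y
    rw [du_x, dv_y, reshape_dx, reshape_dy] at h
    have e : ∑ r ∈ Finset.range R, ∑ s ∈ Finset.range (r+1),
        ((((r + 1 - s : ℕ) : ℝ) * a (r+1) s) - (((s : ℝ) + 1) * A (r+1) (s+1))) * x ^ (r-s) * y ^ s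
        = (∑ r ∈ Finset.range R, ∑ s ∈ Finset.range (r+1),
            (((r + 1 - s : ℕ) : ℝ) * a (r+1) s) * x ^ (r-s) * y ^ s)
          - ∑ r ∈ Finset.range R, ∑ s ∈ Finset.range (r+1),
            (((s : ℝ) + 1) * A (r+1) (s+1)) * x ^ (r-s) * y ^ s := by
      rw [← Finset.sum_sub_distrib]
      apply Finset.sum_congr rfl
      intro r _
      rw [← Finset.sum_sub_distrib]
      apply Finset.sum_congr rfl
      intro s _
      ring
    rw [e, h, sub_self]
  have K2' : ∀ r < R, ∀ s ≤ r,
      (((s : ℝ) + 1) * a (r+1) (s+1)) + (((r + 1 - s : ℕ) : ℝ) * A (r+1) s) = 0 := by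
    apply L2 R
    intro x y
    have h := hCR2 x y
    rw [du_y, dv_x, reshape_dy, reshape_dx] at h
    have e : ∑ r ∈ Finset.range R, ∑ s ∈ Finset.range (r+1),
        ((((s : ℝ) + 1) * a (r+1) (s+1)) + (((r + 1 - s : ℕ) : ℝ) * A (r+1) s)) * x ^ (r-s) * y ^ s
        = (∑ r ∈ Finset.range R, ∑ s ∈ Finset.range (r+1),
            (((s : ℝ) + 1) * a (r+1) (s+1)) * x ^ (r-s) * y ^ s)
          + ∑ r ∈ Finset.range R, ∑ s ∈ Finset.range (r+1),
            (((r + 1 - s : ℕ) : ℝ) * A (r+1) s) * x ^ (r-s) * y ^ s := by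
      rw [← Finset.sum_add_distrib]
      apply Finset.sum_congr rfl
      intro r _
      rw [← Finset.sum_add_distrib]
      apply Finset.sum_congr rfl
      intro s _
      ring
    rw [e, h]
    ring
  have K1 : ∀ r, 1 ≤ r → r ≤ R → ∀ s < r,
      ((r - s : ℕ) : ℝ) * a r s = ((s : ℝ) + 1) * A r (s+1) := by
    intro r hr1 hrR s hsr
    have h := K1' (r-1) (by omega) s (by omega)
    have hr : r - 1 + 1 = r := by omega
    rw [hr] at h
    linarith [h]
  have K2 : ∀ r, 1 ≤ r → r ≤ R → ∀ s < r,
      ((s : ℝ) + 1) * a r (s+1) = -(((r - s : ℕ) : ℝ) * A r s) := by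
    intro r hr1 hrR s hsr
    have h := K2' (r-1) (by omega) s (by omega)
    have hr : r - 1 + 1 = r := by omega
    rw [hr] at h
    linarith [h]
  have hkey := key R a A K1 K2
  intro x y
  constructor
  · rw [hu x y, Finset.sum_range_succ']
    have h0 : (∑ s ∈ Finset.range (0+1), a 0 s * x ^ (0-s) * y ^ s) = a 0 0 := by simp
    rw [h0, add_comm]
    congr 1
    rw [← Finset.Ico_add_one_right_eq_Icc, Finset.sum_Ico_eq_sum_range]
    apply Finset.sum_congr rfl
    intro r hr
    rw [Finset.mem_range] at hr
    have h1 : 1 + r = r + 1 := by omega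
    rw [h1]
    apply sum_formula_u
    intro s hs
    exact (hkey (r+1) (by omega) (by omega) s hs).1
  · rw [hv x y, Finset.sum_range_succ']
    have h0 : (∑ s ∈ Finset.range (0+1), A 0 s * x ^ (0-s) * y ^ s) = A 0 0 := by simp
    rw [h0, add_comm]
    congr 1
    rw [← Finset.Ico_add_one_right_eq_Icc, Finset.sum_Ico_eq_sum_range]
    apply Finset.sum_congr rfl
    intro r hr
    rw [Finset.mem_range] at hr
    have h1 : 1 + r = r + 1 := by omega
    rw [h1]
    apply sum_formula_v
    intro s hs
    exact (hkey (r+1) (by omega) (by omega) s hs).2
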